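/- (Theorem 1) Suppose the system is s-sparse observable, and suppose the attacks satisfy supp(a_i) ⊆ Γ for all i, for some fixed Γ ⊆ {1,…,q} with |Γ| = s. Then there exists r ≤ n (namely r = b, the maximum over all size-s sets Γ' of the minimum r' with rank O_{Γ'}(r') = n) such that for every k ≥ r−1 the state x_{k−r+1} equals at least one element of the set X(k,r) = { L_{Γ'}(Y_{k,Γ'} − D_{Γ'} U_{k−1}) : Γ' ⊆ {1,…,q}, |Γ'| = s }. -/
import Mathlib


open Matrix

namespace SS

variable {n p q : ℕ}

/-- The matrix obtained from a matrix `M` with `q` rows by deleting the rows indexed by `S`. -/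
def dele {m' : ℕ} (M : Matrix (Fin q) (Fin m') ℝ) (S : Finset (Fin q)) :
    Matrix {i : Fin q // i ∉ S} (Fin m') ℝ :=
  fun i j => M i.1 j

/-- The vector obtained from `v ∈ ℝ^q` by deleting the entries indexed by `S`. -/
def delv (v : Fin q → ℝ) (S : Finset (Fin q)) : {i : Fin q // i ∉ S} → ℝ :=
  fun i => v i.1

/-- A trajectory of the system `x_{k+1} = A x_k + B u_k`, `y_k = C x_k + a_k`. -/
def Traj (A : Matrix (Fin n) (Fin n) ℝ) (B : Matrix (Fin n) (Fin p) ℝ)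
    (C : Matrix (Fin q) (Fin n) ℝ) (x : ℕ → Fin n → ℝ) (u : ℕ → Fin p → ℝ)
    (a y : ℕ → Fin q → ℝ) : Prop :=
  (∀ k, x (k + 1) = A *ᵥ x k + B *ᵥ u k) ∧ ∀ k, y k = C *ᵥ x k + a k

/-- The stacked matrix `[M; MA; …; MA^{r-1}]`. -/
def stack (A : Matrix (Fin n) (Fin n) ℝ) {ι : Type} (M : Matrix ι (Fin n) ℝ)
    (r : ℕ) : Matrix (Fin r × ι) (Fin n) ℝ :=
  fun i j => (M * A ^ (i.1 : ℕ)) i.2 j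

/-- The pair `(A, M)` is observable: `[M; MA; …; MA^{n-1}]` has rank `n`. -/
def Observable (A : Matrix (Fin n) (Fin n) ℝ) {ι : Type} [Fintype ι]
    (M : Matrix ι (Fin n) ℝ) : Prop :=
  (stack A M n).rank = n

/-- `s`-sparse observability: `(A, C(Γ))` is observable for every `Γ` with `|Γ| = s`. -/
def SparseObs (A : Matrix (Fin n) (Fin n) ℝ) (C : Matrix (Fin q) (Fin n) ℝ)
    (s : ℕ) : Prop :=
  ∀ Γ : Finset (Fin q), Γ.card = s → Observable A (dele C Γ)

/-- `O_S(r) = [C(S); C(S)A; …; C(S)A^{r-1}]`. -/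
def Omat (A : Matrix (Fin n) (Fin n) ℝ) (C : Matrix (Fin q) (Fin n) ℝ)
    (S : Finset (Fin q)) (r : ℕ) :
    Matrix (Fin r × {i : Fin q // i ∉ S}) (Fin n) ℝ :=
  stack A (dele C S) r

/-- `L_S = (O_S(r)ᵀ O_S(r))⁻¹ O_S(r)ᵀ`. -/
noncomputable def Lmat (A : Matrix (Fin n) (Fin n) ℝ) (C : Matrix (Fin q) (Fin n) ℝ)
    (S : Finset (Fin q)) (r : ℕ) :
    Matrix (Fin n) (Fin r × {i : Fin q // i ∉ S}) ℝ :=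
  ((Omat A C S r)ᵀ * Omat A C S r)⁻¹ * (Omat A C S r)ᵀ

/-- Stacked output `Y_{k,S} = [y_{k-r+1}(S); …; y_k(S)]`. -/
def Yvec (y : ℕ → Fin q → ℝ) (S : Finset (Fin q)) (r k : ℕ) :
    Fin r × {i : Fin q // i ∉ S} → ℝ :=
  fun i => delv (y (k + 1 - r + (i.1 : ℕ))) S i.2

/-- Stacked attack `A_{k,S} = [a_{k-r+1}(S); …; a_k(S)]`. -/
def Avec (a : ℕ → Fin q → ℝ) (S : Finset (Fin q)) (r k : ℕ) :
    Fin r × {i : Fin q // i ∉ S} → ℝ :=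
  fun i => delv (a (k + 1 - r + (i.1 : ℕ))) S i.2

/-- Stacked input `U_{k-1} = [u_{k-r+1}; …; u_{k-1}]`. -/
def Uvec (u : ℕ → Fin p → ℝ) (r k : ℕ) : Fin (r - 1) × Fin p → ℝ :=
  fun i => u (k + 1 - r + (i.1 : ℕ)) i.2

/-- Block matrix `D_S`, with `(i, j)` block `C(S) A^{i-j-1} B` for `i > j` and `0` otherwise. -/
def Dmat (A : Matrix (Fin n) (Fin n) ℝ) (B : Matrix (Fin n) (Fin p) ℝ)
    (C : Matrix (Fin q) (Fin n) ℝ) (S : Finset (Fin q)) (r : ℕ) :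
    Matrix (Fin r × {i : Fin q // i ∉ S}) (Fin (r - 1) × Fin p) ℝ :=
  fun i j =>
    if (j.1 : ℕ) < (i.1 : ℕ) then
      (dele C S * A ^ ((i.1 : ℕ) - (j.1 : ℕ) - 1) * B) i.2 j.2
    else 0

/-- The minimal `r` such that `rank O_S(r) = n`. -/
noncomputable def rmin (A : Matrix (Fin n) (Fin n) ℝ) (C : Matrix (Fin q) (Fin n) ℝ)
    (S : Finset (Fin q)) : ℕ :=
  sInf {r : ℕ | (Omat A C S r).rank = n}

/-- `b`: the maximum of `rmin` over all index sets of cardinality `s`. -/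
noncomputable def bBound (A : Matrix (Fin n) (Fin n) ℝ) (C : Matrix (Fin q) (Fin n) ℝ)
    (s : ℕ) : ℕ :=
  (Finset.powersetCard s (Finset.univ : Finset (Fin q))).sup (rmin A C)

/-- Windowed least-squares estimate `x̂_S(m) = L_S (Y_{k+m-1,S} - D_S U_{k+m-2})`. -/
noncomputable def xhat (A : Matrix (Fin n) (Fin n) ℝ) (B : Matrix (Fin n) (Fin p) ℝ)
    (C : Matrix (Fin q) (Fin n) ℝ) (u : ℕ → Fin p → ℝ) (y : ℕ → Fin q → ℝ)
    (S : Finset (Fin q)) (r k m : ℕ) : Fin n → ℝ :=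
  Lmat A C S r *ᵥ (Yvec y S r (k + m - 1) - Dmat A B C S r *ᵥ Uvec u r (k + m - 1))

/-- The filtered index families `D_ς` of Algorithm 1. -/
def Dfam (A : Matrix (Fin n) (Fin n) ℝ) (B : Matrix (Fin n) (Fin p) ℝ)
    (C : Matrix (Fin q) (Fin n) ℝ) (u : ℕ → Fin p → ℝ) (y : ℕ → Fin q → ℝ)
    (s r k : ℕ) : ℕ → Set (Finset (Fin q))
  | 0 => {Γ' : Finset (Fin q) | Γ'.card = s}
  | ς + 1 => {Γ' ∈ Dfam A B C u y s r k ς |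
      xhat A B C u y Γ' r k (ς + 2) - A *ᵥ xhat A B C u y Γ' r k (ς + 1)
        - B *ᵥ u (k + 1 - r + ς) = 0}



lemma isUnit_of_rank_eq {n : ℕ} {m' : Type} [Fintype m'] (O : Matrix m' (Fin n) ℝ)
    (h : O.rank = n) : IsUnit (Oᵀ * O) := by
  classical
  rw [← Matrix.mulVec_surjective_iff_isUnit]
  have h2 : (Oᵀ * O).rank = n := by rw [Matrix.rank_transpose_mul_self, h]
  have : LinearMap.range (Oᵀ * O).mulVecLin = ⊤ := by
    apply Submodule.eq_top_of_finrank_eq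
    rw [← Matrix.rank, h2]
    simp [Module.finrank_pi]
  exact LinearMap.range_eq_top.mp this

lemma traj_pow {n p : ℕ} (A : Matrix (Fin n) (Fin n) ℝ) (B : Matrix (Fin n) (Fin p) ℝ)
    (x : ℕ → Fin n → ℝ) (u : ℕ → Fin p → ℝ)
    (hx : ∀ k, x (k + 1) = A *ᵥ x k + B *ᵥ u k) (k0 : ℕ) : ∀ i : ℕ,
    x (k0 + i) = (A ^ i) *ᵥ x k0
      + ∑ j ∈ Finset.range i, (A ^ (i - j - 1)) *ᵥ (B *ᵥ u (k0 + j)) := by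
  intro i
  induction i with
  | zero => simp
  | succ i ih =>
    have hstep : k0 + (i + 1) = (k0 + i) + 1 := by ring
    have hsum : A *ᵥ (∑ j ∈ Finset.range i, (A ^ (i - j - 1)) *ᵥ (B *ᵥ u (k0 + j)))
        = ∑ j ∈ Finset.range i, A *ᵥ ((A ^ (i - j - 1)) *ᵥ (B *ᵥ u (k0 + j))) :=
      map_sum A.mulVecLin _ _
    rw [hstep, hx, ih, Matrix.mulVec_add, hsum, Matrix.mulVec_mulVec, ← pow_succ',
      Finset.sum_range_succ]
    have hterm : ∀ j ∈ Finset.range i,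
        A *ᵥ ((A ^ (i - j - 1)) *ᵥ (B *ᵥ u (k0 + j)))
          = (A ^ (i + 1 - j - 1)) *ᵥ (B *ᵥ u (k0 + j)) := by
      intro j hj
      rw [Finset.mem_range] at hj
      have he : i + 1 - j - 1 = (i - j - 1) + 1 := by omega
      rw [he, pow_succ', Matrix.mulVec_mulVec]
    rw [Finset.sum_congr rfl hterm]
    have h0 : i + 1 - i - 1 = 0 := by omega
    rw [h0, pow_zero, Matrix.one_mulVec]
    abel

/-- Theorem 1: under `s`-sparse observability and attacks supported on a fixed
`Γ` with `|Γ| = s`, there exists `r ≤ n` such that for every `k ≥ r - 1` the state `x_{k-r+1}`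
equals at least one element of `X(k,r) = {L_{Γ'}(Y_{k,Γ'} - D_{Γ'} U_{k-1}) : |Γ'| = s}`. -/
theorem state_in_candidate_set
    (hn : 0 < n) (hp : 0 < p) (hq : 0 < q) (s : ℕ) (hs : 0 < s)
    (A : Matrix (Fin n) (Fin n) ℝ) (B : Matrix (Fin n) (Fin p) ℝ)
    (C : Matrix (Fin q) (Fin n) ℝ)
    (hSO : SparseObs A C s)
    (x : ℕ → Fin n → ℝ) (u : ℕ → Fin p → ℝ) (a y : ℕ → Fin q → ℝ)
    (hT : Traj A B C x u a y)
    (Γ : Finset (Fin q)) (hΓ : Γ.card = s)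
    (hsupp : ∀ i, Function.support (a i) ⊆ (Γ : Set (Fin q))) :
    ∃ r ≤ n, ∀ k, r ≤ k + 1 →
      ∃ Γ' : Finset (Fin q), Γ'.card = s ∧
        Lmat A C Γ' r *ᵥ (Yvec y Γ' r k - Dmat A B C Γ' r *ᵥ Uvec u r k) =
          x (k + 1 - r) := by
  classical
  obtain ⟨hx, hy⟩ := hT
  refine ⟨n, le_refl n, fun k hk => ⟨Γ, hΓ, ?_⟩⟩
  set k0 := k + 1 - n with hk0
  have hO : (Omat A C Γ n).rank = n := hSO Γ hΓ
  have hunit : IsUnit ((Omat A C Γ n)ᵀ * Omat A C Γ n) := isUnit_of_rank_eq _ hO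
  have key : Yvec y Γ n k - Dmat A B C Γ n *ᵥ Uvec u n k = Omat A C Γ n *ᵥ x k0 := by
    funext it
    obtain ⟨i, t⟩ := it
    have ha : a (k0 + (i : ℕ)) t.1 = 0 := by
      by_contra h
      exact t.2 (hsupp _ h)
    have hD : (Dmat A B C Γ n *ᵥ Uvec u n k) (i, t)
        = ∑ j ∈ Finset.range (i : ℕ),
            (dele C Γ *ᵥ ((A ^ ((i : ℕ) - j - 1)) *ᵥ (B *ᵥ u (k0 + j)))) t := by
      have h1 : (Dmat A B C Γ n *ᵥ Uvec u n k) (i, t)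
          = ∑ j1 : Fin (n - 1), ∑ j2 : Fin p,
              (if (j1 : ℕ) < (i : ℕ) then
                (dele C Γ * A ^ ((i : ℕ) - (j1 : ℕ) - 1) * B) t j2 else 0)
                * u (k0 + (j1 : ℕ)) j2 := by
        rw [Matrix.mulVec, dotProduct, Fintype.sum_prod_type]
        rfl
      have h2 : ∀ j1 : Fin (n - 1), ∑ j2 : Fin p,
            (if (j1 : ℕ) < (i : ℕ) then
              (dele C Γ * A ^ ((i : ℕ) - (j1 : ℕ) - 1) * B) t j2 else 0)
              * u (k0 + (j1 : ℕ)) j2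
          = if (j1 : ℕ) < (i : ℕ) then
              (dele C Γ *ᵥ ((A ^ ((i : ℕ) - (j1 : ℕ) - 1)) *ᵥ (B *ᵥ u (k0 + (j1 : ℕ))))) t
            else 0 := by
        intro j1
        split_ifs with hlt
        · rw [Matrix.mulVec_mulVec, Matrix.mulVec_mulVec]
          rfl
        · simp
      rw [h1, Finset.sum_congr rfl fun j1 _ => h2 j1,
        Fin.sum_univ_eq_sum_range (fun j => if j < (i : ℕ) then
          (dele C Γ *ᵥ ((A ^ ((i : ℕ) - j - 1)) *ᵥ (B *ᵥ u (k0 + j)))) t else 0),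
        ← Finset.sum_filter]
      congr 1
      ext j
      simp only [Finset.mem_filter, Finset.mem_range]
      have hi : (i : ℕ) < n := i.isLt
      omega
    have hY : Yvec y Γ n k (i, t)
        = (dele C Γ *ᵥ x (k0 + (i : ℕ))) t + a (k0 + (i : ℕ)) t.1 := by
      show delv (y (k + 1 - n + (i : ℕ))) Γ t = _
      rw [← hk0, hy]
      rfl
    have hxv := traj_pow A B x u hx k0 (i : ℕ)
    have hsum2 : dele C Γ *ᵥ (∑ j ∈ Finset.range (i : ℕ),
          (A ^ ((i : ℕ) - j - 1)) *ᵥ (B *ᵥ u (k0 + j)))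
        = ∑ j ∈ Finset.range (i : ℕ),
          dele C Γ *ᵥ ((A ^ ((i : ℕ) - j - 1)) *ᵥ (B *ᵥ u (k0 + j))) :=
      map_sum (dele C Γ).mulVecLin _ _
    have hO' : (Omat A C Γ n *ᵥ x k0) (i, t)
        = (dele C Γ *ᵥ ((A ^ (i : ℕ)) *ᵥ x k0)) t := by
      rw [Matrix.mulVec_mulVec]
      rfl
    have hmain := congrFun (by rw [hxv, Matrix.mulVec_add, hsum2] :
      dele C Γ *ᵥ x (k0 + (i : ℕ))
        = dele C Γ *ᵥ ((A ^ (i : ℕ)) *ᵥ x k0)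
          + ∑ j ∈ Finset.range (i : ℕ),
              dele C Γ *ᵥ ((A ^ ((i : ℕ) - j - 1)) *ᵥ (B *ᵥ u (k0 + j)))) t
    rw [Pi.add_apply, Finset.sum_apply] at hmain
    rw [Pi.sub_apply, hY, ha, add_zero, hD, hO', hmain]
    ring
  rw [key, Matrix.mulVec_mulVec]
  have hL : Lmat A C Γ n * Omat A C Γ n = 1 := by
    rw [Lmat, Matrix.mul_assoc, Matrix.nonsing_inv_mul _ (Matrix.isUnit_iff_isUnit_det _ |>.mp hunit)]
  rw [hL, Matrix.one_mulVec]


end SS
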